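/- Let n ≥ 1, N = 2^n and θ ≥ 0. For each k ∈ {0, …, N−1} and each l ∈ {1, …, n}, let α^{(k,l)} = (α^{(k,l)}_x, α^{(k,l)}_y, α^{(k,l)}_z) ∈ ℝ³ be a unit vector, and set Γ_k = ∑_{l=1}^{n} I₂^{⊗(l−1)} ⊗ (α^{(k,l)}_x σ_x + α^{(k,l)}_y σ_y + α^{(k,l)}_z σ_z) ⊗ I₂^{⊗(n−l)}. Let F_G = N^{−1/2} ∑_{j,k=0}^{N−1} e^{2πijk/N} exp(iθΓ_k) E_{kj} be the generalized quantum Fourier transform and F = N^{−1/2} ∑_{j,k=0}^{N−1} e^{2πijk/N} E_{kj} the standard quantum Fourier transform. Then ‖F_G − F‖ ≤ 2^{3n/2} · √2 · θ n · e^{√2 θ n}, where ‖·‖ denotes the operator norm on N×N matrices. -/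

import Mathlib

open Matrix
open scoped Matrix.Norms.L2Operator

noncomputable section

/-- The Pauli matrix `σ_x`. -/
def σx : Matrix (Fin 2) (Fin 2) ℂ := !![0, 1; 1, 0]

/-- The Pauli matrix `σ_y`. -/
def σy : Matrix (Fin 2) (Fin 2) ℂ := !![0, -Complex.I; Complex.I, 0]

/-- The Pauli matrix `σ_z`. -/
def σz : Matrix (Fin 2) (Fin 2) ℂ := !![1, 0; 0, -1]

/-- The `n`-fold Kronecker product of a family of `2 × 2` matrices, realized on the
index type `Fin n → Fin 2` (factor `l = 0` is the leftmost tensor factor). -/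
def tensorFam {n : ℕ} (M : Fin n → Matrix (Fin 2) (Fin 2) ℂ) :
    Matrix (Fin n → Fin 2) (Fin n → Fin 2) ℂ :=
  Matrix.of fun i j => ∏ l, M l (i l) (j l)

/- ### Auxiliary lemmas -/

open scoped Nat

lemma tensorFam_mul_aux {n : ℕ} (M N : Fin n → Matrix (Fin 2) (Fin 2) ℂ) :
    tensorFam M * tensorFam N = tensorFam (fun l => M l * N l) := by
  ext i j
  simp only [tensorFam, Matrix.mul_apply, Matrix.of_apply]
  rw [Finset.prod_univ_sum]
  simp [Finset.prod_mul_distrib, Fintype.piFinset_univ]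

lemma tensorFam_one_aux {n : ℕ} :
    tensorFam (fun _ : Fin n => (1 : Matrix (Fin 2) (Fin 2) ℂ)) = 1 := by
  ext i j
  by_cases h : i = j
  · subst h; simp [tensorFam, Matrix.one_apply]
  · obtain ⟨l, hl⟩ := Function.ne_iff.mp h
    rw [Matrix.one_apply_ne h]
    exact Finset.prod_eq_zero (Finset.mem_univ l) (by simp [Matrix.one_apply, hl])

lemma tensorFam_conjTranspose_aux {n : ℕ} (M : Fin n → Matrix (Fin 2) (Fin 2) ℂ) :
    (tensorFam M)ᴴ = tensorFam (fun l => (M l)ᴴ) := by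
  ext i j
  simp [tensorFam, Matrix.conjTranspose_apply, star_prod]

lemma pauliA_herm_aux (a b c : ℝ) :
    ((a:ℂ) • σx + (b:ℂ) • σy + (c:ℂ) • σz)ᴴ = (a:ℂ) • σx + (b:ℂ) • σy + (c:ℂ) • σz := by
  ext i j
  fin_cases i <;> fin_cases j <;>
    simp [σx, σy, σz, Matrix.conjTranspose_apply, Complex.ext_iff]

lemma pauliA_sq_aux (a b c : ℝ) (h : a ^ 2 + b ^ 2 + c ^ 2 = 1) :
    ((a:ℂ) • σx + (b:ℂ) • σy + (c:ℂ) • σz) * ((a:ℂ) • σx + (b:ℂ) • σy + (c:ℂ) • σz) = 1 := by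
  have h' : (a:ℂ) ^ 2 + (b:ℂ) ^ 2 + (c:ℂ) ^ 2 = 1 := by
    exact_mod_cast congrArg (Complex.ofReal) h
  ext i j
  fin_cases i <;> fin_cases j <;>
    simp [σx, σy, σz, Matrix.mul_apply, Fin.sum_univ_two, Matrix.one_apply] <;>
    norm_num <;>
    first
      | ring1
      | linear_combination -h'
      | linear_combination (-(b:ℂ)^2) * Complex.I_mul_I
      | linear_combination h' + (-(b:ℂ)^2) * Complex.I_mul_I
      | linear_combination h'

lemma norm_exp_sub_one_le_aux {𝔸 : Type*} [NormedRing 𝔸] [NormedAlgebra ℂ 𝔸]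
    [CompleteSpace 𝔸] (x : 𝔸) :
    ‖NormedSpace.exp x - 1‖ ≤ ‖x‖ * Real.exp ‖x‖ := by
  have hs : Summable (fun n : ℕ => (n ! : ℂ)⁻¹ • x ^ n) :=
    NormedSpace.expSeries_summable' (𝕂 := ℂ) x
  have hexp : NormedSpace.exp x - 1 = ∑' n : ℕ, (((n+1) ! : ℂ)⁻¹ • x ^ (n+1)) := by
    rw [NormedSpace.exp_eq_tsum ℂ]
    simp only []
    rw [hs.tsum_eq_zero_add]
    simp
  rw [hexp]
  have hg : HasSum (fun n : ℕ => ‖x‖ * (‖x‖ ^ n / n !)) (‖x‖ * Real.exp ‖x‖) := by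
    have := NormedSpace.expSeries_div_hasSum_exp (‖x‖ : ℝ)
    rw [← Real.exp_eq_exp_ℝ] at this
    exact this.mul_left ‖x‖
  refine tsum_of_norm_bounded hg (fun n => ?_)
  have h1 : ‖((n+1) ! : ℂ)⁻¹ • x ^ (n+1)‖ ≤ (((n+1)! : ℝ))⁻¹ * ‖x‖ ^ (n+1) := by
    rw [norm_smul]
    gcongr
    · simp
    · exact norm_pow_le' x (Nat.succ_pos n)
  refine h1.trans ?_
  rw [pow_succ]
  have h2 : (((n+1)! : ℝ))⁻¹ ≤ ((n ! : ℝ))⁻¹ := by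
    apply inv_anti₀
    · positivity
    · exact_mod_cast Nat.factorial_le (Nat.le_succ n)
  calc (((n+1)! : ℝ))⁻¹ * (‖x‖ ^ n * ‖x‖) ≤ ((n ! : ℝ))⁻¹ * (‖x‖ ^ n * ‖x‖) := by
        apply mul_le_mul_of_nonneg_right h2; positivity
    _ = ‖x‖ * (‖x‖ ^ n / n !) := by ring

lemma norm_le_one_of_sq_aux {m : Type*} [Fintype m] [DecidableEq m] [Nonempty m]
    (S : Matrix m m ℂ) (h1 : Sᴴ * S = 1) : ‖S‖ ≤ 1 := by
  have h2 : ‖S‖ * ‖S‖ = 1 := by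
    rw [← Matrix.l2_opNorm_conjTranspose_mul_self, h1, CStarRing.norm_one]
  nlinarith [norm_nonneg S]

lemma conjT_stdBasis_aux {m : Type*} [Fintype m] [DecidableEq m] (k j : m) :
    (Matrix.single k j (1:ℂ))ᴴ = Matrix.single j k (1:ℂ) := by
  ext i' j'
  simp only [Matrix.conjTranspose_apply, Matrix.single]
  simp only [Matrix.of_apply]
  split_ifs with h1 h2 h2 <;> simp_all <;> tauto

lemma norm_stdBasisMatrix_le_aux {m : Type*} [Fintype m] [DecidableEq m] [Nonempty m] (k j : m) :
    ‖Matrix.single k j (1:ℂ)‖ ≤ 1 := by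
  have hjj : ‖Matrix.single j j (1:ℂ)‖ ≤ 1 := by
    have h2 : ‖Matrix.single j j (1:ℂ)‖ * ‖Matrix.single j j (1:ℂ)‖
        = ‖Matrix.single j j (1:ℂ)‖ := by
      rw [← Matrix.l2_opNorm_conjTranspose_mul_self, conjT_stdBasis_aux,
        Matrix.single_mul_single_same, one_mul]
    nlinarith [norm_nonneg (Matrix.single j j (1:ℂ))]
  have h3 : ‖Matrix.single k j (1:ℂ)‖ * ‖Matrix.single k j (1:ℂ)‖ ≤ 1 := by
    rw [← Matrix.l2_opNorm_conjTranspose_mul_self, conjT_stdBasis_aux,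
      Matrix.single_mul_single_same, one_mul]
    exact hjj
  nlinarith [norm_nonneg (Matrix.single k j (1:ℂ))]

lemma gamma_term_norm_aux {n : ℕ} (l : Fin n) (A : Matrix (Fin 2) (Fin 2) ℂ)
    (hH : Aᴴ = A) (hsq : A * A = 1) :
    ‖(Matrix.reindex finFunctionFinEquiv finFunctionFinEquiv
        (tensorFam (Function.update (fun _ : Fin n => (1 : Matrix (Fin 2) (Fin 2) ℂ)) l A))
      : Matrix (Fin (2^n)) (Fin (2^n)) ℂ)‖ ≤ 1 := by
  set u : Fin n → Matrix (Fin 2) (Fin 2) ℂ := fun _ => 1 with hu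
  set T := tensorFam (Function.update u l A) with hT
  have hfam : (fun m => (Function.update u l A m)ᴴ) = Function.update u l A := by
    funext m
    by_cases h : m = l
    · subst h; simp [hH]
    · simp [Function.update_of_ne h, hu]
  have hTH : Tᴴ = T := by
    rw [hT, tensorFam_conjTranspose_aux, hfam]
  have hTT : T * T = 1 := by
    rw [hT, tensorFam_mul_aux]
    have : (fun m => Function.update u l A m * Function.update u l A m)
        = fun _ : Fin n => (1 : Matrix (Fin 2) (Fin 2) ℂ) := by
      funext m
      by_cases h : m = l
      · subst h; simp [hsq]
      · simp [Function.update_of_ne h, hu]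
    rw [this, tensorFam_one_aux]
  apply norm_le_one_of_sq_aux
  rw [Matrix.conjTranspose_reindex, hTH]
  rw [← Matrix.reindexAlgEquiv_apply (R := ℂ), ← _root_.map_mul, hTT, _root_.map_one]

/-- Distance between the generalized quantum Fourier transform
`F_G = N^{-1/2} ∑_{j,k} e^{2πijk/N} exp(iθΓ_k) E_{kj}` (with
`Γ_k = ∑_l I₂^{⊗(l-1)} ⊗ (α^{(k,l)}·σ) ⊗ I₂^{⊗(n-l)}` built from unit vectors
`α^{(k,l)} ∈ ℝ³`) and the standard quantum Fourier transform
`F = N^{-1/2} ∑_{j,k} e^{2πijk/N} E_{kj}`: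
`‖F_G - F‖ ≤ 2^{3n/2} √2 θ n e^{√2 θ n}` in operator norm. -/
theorem generalized_qft_dist_to_qft (n : ℕ) (hn : 1 ≤ n) (θ : ℝ) (hθ : 0 ≤ θ)
    (ax ay az : Fin (2 ^ n) → Fin n → ℝ)
    (hunit : ∀ k l, (ax k l) ^ 2 + (ay k l) ^ 2 + (az k l) ^ 2 = 1)
    (Γ : Fin (2 ^ n) → Matrix (Fin (2 ^ n)) (Fin (2 ^ n)) ℂ)
    (hΓ : ∀ k, Γ k = Matrix.reindex finFunctionFinEquiv finFunctionFinEquiv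
      (∑ l : Fin n, tensorFam (Function.update
        (fun _ => (1 : Matrix (Fin 2) (Fin 2) ℂ)) l
        ((ax k l : ℂ) • σx + (ay k l : ℂ) • σy + (az k l : ℂ) • σz))))
    (FG F : Matrix (Fin (2 ^ n)) (Fin (2 ^ n)) ℂ)
    (hFG : FG = ((Real.sqrt (2 ^ n) : ℂ))⁻¹ •
      ∑ j : Fin (2 ^ n), ∑ k : Fin (2 ^ n),
        Complex.exp (2 * Real.pi * Complex.I * (j : ℕ) * (k : ℕ) / (2 ^ n : ℕ)) •
          (NormedSpace.exp ((Complex.I * (θ : ℂ)) • Γ k) *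
            Matrix.single k j (1 : ℂ)))
    (hF : F = ((Real.sqrt (2 ^ n) : ℂ))⁻¹ •
      ∑ j : Fin (2 ^ n), ∑ k : Fin (2 ^ n),
        Complex.exp (2 * Real.pi * Complex.I * (j : ℕ) * (k : ℕ) / (2 ^ n : ℕ)) •
          Matrix.single k j (1 : ℂ)) :
    ‖FG - F‖ ≤ (2 : ℝ) ^ ((3 * (n : ℝ)) / 2) * Real.sqrt 2 * (θ * n) *
      Real.exp (Real.sqrt 2 * θ * n) := by
  -- Notation
  have hNpos : (0:ℝ) < (2:ℝ) ^ n := by positivity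
  -- Norm bound on Γ
  have hΓnorm : ∀ k, ‖Γ k‖ ≤ (n : ℝ) := by
    intro k
    rw [hΓ k, ← Matrix.reindexAlgEquiv_apply (R := ℂ), _root_.map_sum]
    refine (norm_sum_le _ _).trans ?_
    have : ∀ l : Fin n, ‖(Matrix.reindexAlgEquiv ℂ ℂ finFunctionFinEquiv)
        (tensorFam (Function.update (fun _ => (1 : Matrix (Fin 2) (Fin 2) ℂ)) l
          ((ax k l : ℂ) • σx + (ay k l : ℂ) • σy + (az k l : ℂ) • σz)))‖ ≤ 1 := by
      intro l
      rw [Matrix.reindexAlgEquiv_apply]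
      exact gamma_term_norm_aux l _ (pauliA_herm_aux _ _ _) (pauliA_sq_aux _ _ _ (hunit k l))
    calc ∑ l : Fin n, ‖_‖ ≤ ∑ _l : Fin n, (1:ℝ) := Finset.sum_le_sum (fun l _ => this l)
      _ = (n : ℝ) := by simp
  -- Norm bound on the exponential factor
  set T0 : ℝ := θ * n * Real.exp (θ * n) with hT0
  have hexpnorm : ∀ k, ‖NormedSpace.exp ((Complex.I * (θ:ℂ)) • Γ k) - 1‖ ≤ T0 := by
    intro k
    refine (norm_exp_sub_one_le_aux _).trans ?_
    have harg : ‖(Complex.I * (θ:ℂ)) • Γ k‖ ≤ θ * n := by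
      rw [norm_smul]
      have : ‖Complex.I * (θ:ℂ)‖ = θ := by
        rw [norm_mul, Complex.norm_I, one_mul, Complex.norm_real, Real.norm_of_nonneg hθ]
      rw [this]
      exact mul_le_mul_of_nonneg_left (hΓnorm k) hθ
    have h0 : (0:ℝ) ≤ ‖(Complex.I * (θ:ℂ)) • Γ k‖ := norm_nonneg _
    calc ‖(Complex.I * (θ:ℂ)) • Γ k‖ * Real.exp ‖(Complex.I * (θ:ℂ)) • Γ k‖
        ≤ (θ * n) * Real.exp (θ * n) := by
          apply mul_le_mul harg (Real.exp_le_exp.mpr harg) (Real.exp_pos _).le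
          positivity
      _ = T0 := rfl
  have hT0nonneg : 0 ≤ T0 := by positivity
  -- Rewrite the difference
  have key : FG - F = ((Real.sqrt (2 ^ n) : ℂ))⁻¹ •
      ∑ j : Fin (2 ^ n), ∑ k : Fin (2 ^ n),
        Complex.exp (2 * Real.pi * Complex.I * (j : ℕ) * (k : ℕ) / (2 ^ n : ℕ)) •
          ((NormedSpace.exp ((Complex.I * (θ : ℂ)) • Γ k) - 1) *
            Matrix.single k j (1 : ℂ)) := by
    rw [hFG, hF, ← smul_sub, ← Finset.sum_sub_distrib]
    congr 1
    refine Finset.sum_congr rfl (fun j _ => ?_)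
    rw [← Finset.sum_sub_distrib]
    refine Finset.sum_congr rfl (fun k _ => ?_)
    rw [← smul_sub, Matrix.sub_mul, Matrix.one_mul]
  -- Norm of the coefficient
  have hcoef : ∀ j k : Fin (2 ^ n),
      ‖Complex.exp (2 * Real.pi * Complex.I * (j : ℕ) * (k : ℕ) / (2 ^ n : ℕ))‖ = 1 := by
    intro j k
    have : (2 * (Real.pi:ℂ) * Complex.I * ((j:ℕ):ℂ) * ((k:ℕ):ℂ) / ((2^n : ℕ):ℂ))
        = ((2 * Real.pi * (j:ℕ) * (k:ℕ) / ((2^n:ℕ)) : ℝ) : ℂ) * Complex.I := by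
      push_cast
      ring
    rw [this, Complex.norm_exp_ofReal_mul_I]
  -- Bound each term
  have hterm : ∀ j k : Fin (2 ^ n),
      ‖Complex.exp (2 * Real.pi * Complex.I * (j : ℕ) * (k : ℕ) / (2 ^ n : ℕ)) •
        ((NormedSpace.exp ((Complex.I * (θ : ℂ)) • Γ k) - 1) *
          Matrix.single k j (1 : ℂ))‖ ≤ T0 := by
    intro j k
    rw [norm_smul, hcoef j k, one_mul]
    refine (Matrix.l2_opNorm_mul _ _).trans ?_
    calc ‖NormedSpace.exp ((Complex.I * (θ : ℂ)) • Γ k) - 1‖ * ‖Matrix.single k j (1:ℂ)‖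
        ≤ T0 * 1 := by
          apply mul_le_mul (hexpnorm k) (norm_stdBasisMatrix_le_aux k j) (norm_nonneg _) hT0nonneg
      _ = T0 := mul_one _
  -- Put it together
  have hnormc : ‖((Real.sqrt (2 ^ n) : ℂ))⁻¹‖ = (Real.sqrt (2 ^ n))⁻¹ := by
    rw [norm_inv, Complex.norm_real, Real.norm_of_nonneg (Real.sqrt_nonneg _)]
  have hsum : ‖∑ j : Fin (2 ^ n), ∑ k : Fin (2 ^ n),
      Complex.exp (2 * Real.pi * Complex.I * (j : ℕ) * (k : ℕ) / (2 ^ n : ℕ)) •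
        ((NormedSpace.exp ((Complex.I * (θ : ℂ)) • Γ k) - 1) *
          Matrix.single k j (1 : ℂ))‖ ≤ (2:ℝ)^n * ((2:ℝ)^n * T0) := by
    refine (norm_sum_le _ _).trans ?_
    have hin : ∀ j : Fin (2 ^ n), ‖∑ k : Fin (2 ^ n),
        Complex.exp (2 * Real.pi * Complex.I * (j : ℕ) * (k : ℕ) / (2 ^ n : ℕ)) •
          ((NormedSpace.exp ((Complex.I * (θ : ℂ)) • Γ k) - 1) *
            Matrix.single k j (1 : ℂ))‖ ≤ (2:ℝ)^n * T0 := by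
      intro j
      refine (norm_sum_le _ _).trans ?_
      calc ∑ k : Fin (2 ^ n), ‖_‖ ≤ ∑ _k : Fin (2 ^ n), T0 := Finset.sum_le_sum (fun k _ => hterm j k)
        _ = (2:ℝ)^n * T0 := by
          rw [Finset.sum_const, Finset.card_univ, Fintype.card_fin]
          push_cast
          ring
    calc ∑ j : Fin (2 ^ n), ‖_‖ ≤ ∑ _j : Fin (2 ^ n), (2:ℝ)^n * T0 := Finset.sum_le_sum (fun j _ => hin j)
      _ = (2:ℝ)^n * ((2:ℝ)^n * T0) := by
        rw [Finset.sum_const, Finset.card_univ, Fintype.card_fin]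
        push_cast
        ring
  have hstep : ‖FG - F‖ ≤ (Real.sqrt (2^n))⁻¹ * ((2:ℝ)^n * ((2:ℝ)^n * T0)) := by
    rw [key, norm_smul, hnormc]
    exact mul_le_mul_of_nonneg_left hsum (by positivity)
  refine hstep.trans ?_
  -- Final arithmetic
  have hpow : (Real.sqrt ((2:ℝ)^n))⁻¹ * ((2:ℝ)^n * (2:ℝ)^n) = (2:ℝ) ^ ((3 * (n:ℝ)) / 2) := by
    have h1 : Real.sqrt ((2:ℝ)^n) = (2:ℝ) ^ ((n:ℝ)/2) := by
      rw [Real.sqrt_eq_rpow, ← Real.rpow_natCast (2:ℝ) n, ← Real.rpow_mul (by norm_num)]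
      congr 1
      ring
    have h2 : ((2:ℝ)^n : ℝ) = (2:ℝ) ^ ((n:ℝ)) := by
      rw [Real.rpow_natCast]
    rw [h1, h2, ← Real.rpow_neg (by norm_num), ← Real.rpow_add (by norm_num),
      ← Real.rpow_add (by norm_num)]
    ring_nf
  have hT0le : T0 ≤ Real.sqrt 2 * (θ * n) * Real.exp (Real.sqrt 2 * θ * n) := by
    have h12 : (1:ℝ) ≤ Real.sqrt 2 := by
      rw [show (1:ℝ) = Real.sqrt 1 by simp]
      exact Real.sqrt_le_sqrt (by norm_num)
    have hθn : (0:ℝ) ≤ θ * n := by positivity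
    have hee : Real.exp (θ * n) ≤ Real.exp (Real.sqrt 2 * θ * n) := by
      apply Real.exp_le_exp.mpr
      nlinarith
    calc T0 = θ * n * Real.exp (θ * n) := rfl
      _ ≤ θ * n * Real.exp (Real.sqrt 2 * θ * n) := by
        apply mul_le_mul_of_nonneg_left hee hθn
      _ ≤ Real.sqrt 2 * (θ * n) * Real.exp (Real.sqrt 2 * θ * n) := by
        apply mul_le_mul_of_nonneg_right _ (Real.exp_pos _).le
        nlinarith
  calc (Real.sqrt (2^n))⁻¹ * ((2:ℝ)^n * ((2:ℝ)^n * T0))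
      = ((Real.sqrt ((2:ℝ)^n))⁻¹ * ((2:ℝ)^n * (2:ℝ)^n)) * T0 := by ring
    _ = (2:ℝ) ^ ((3 * (n:ℝ)) / 2) * T0 := by rw [hpow]
    _ ≤ (2:ℝ) ^ ((3 * (n:ℝ)) / 2) * (Real.sqrt 2 * (θ * n) * Real.exp (Real.sqrt 2 * θ * n)) := by
        apply mul_le_mul_of_nonneg_left hT0le (by positivity)
    _ = (2:ℝ) ^ ((3 * (n:ℝ)) / 2) * Real.sqrt 2 * (θ * n) * Real.exp (Real.sqrt 2 * θ * n) := by
        ring
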